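/- arXiv:2007.04024 — 3 statements merged into one kernel-verified Lean document; each statement's English description precedes it below -/
import Mathlib

section
/- In the ring TrivSqZeroExt ℤ (ℕ →₀ ℤ), for all natural numbers v, h, all n ≥ 1 and all finitely supported r, k : ℕ →₀ ℤ, setting a = inl((−1)^v) + inr((−1)^{v+1} • r) and b = inl((−1)^h) + inr((−1)^{h+1} • k), one has a^n · (b^n − 1) = inl( (−1)^{n·v}·((−1)^{n·h} − 1) ) + inr( ((−1)^{n·(v+h)}·n) • ( (−1)^{n·h} • r − r − k ) ). In particular every coordinate l of the second component equals (−1)^{n(v+h)}·n·((−1)^{nh}·r(l) − r(l) − k(l)). -/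
open TrivSqZeroExt

private lemma stmt6_pow_form (c : ℤ) (x : ℕ →₀ ℤ) (n : ℕ) :
    (inl c + inr x : TrivSqZeroExt ℤ (ℕ →₀ ℤ)) ^ n
      = inl (c ^ n) + inr (((n : ℤ) * c ^ (n - 1)) • x) := by
  apply TrivSqZeroExt.ext
  · simp
  · rw [snd_pow]
    simp [mul_smul]

private lemma stmt6_mul_form (p s : ℤ) (q t : ℕ →₀ ℤ) :
    ((inl p + inr q) * (inl s + inr t) : TrivSqZeroExt ℤ (ℕ →₀ ℤ))
      = inl (p * s) + inr (p • t + s • q) := by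
  apply TrivSqZeroExt.ext <;> simp

/-- In `U(SO(2)) = TrivSqZeroExt ℤ (ℕ →₀ ℤ)`, for all `v h : ℕ`, `n ≥ 1` and
`r k : ℕ →₀ ℤ`, with `a = inl ((-1)^v) + inr ((-1)^{v+1} • r)` and
`b = inl ((-1)^h) + inr ((-1)^{h+1} • k)` (the degrees of `-Id` on `B(V(m-1))`
and `B(H^N_m)`), one has
`a^n * (b^n - 1) = inl ((-1)^{nv}·((-1)^{nh} - 1))
  + inr (((-1)^{n(v+h)}·n) • ((-1)^{nh} • r - r - k))`;
in particular every coordinate `l` of the second component equals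
`(-1)^{n(v+h)}·n·((-1)^{nh}·r l - r l - k l)`. -/
theorem stmt_6 (v h n : ℕ) (hn : 1 ≤ n) (r k : ℕ →₀ ℤ)
    (a b : TrivSqZeroExt ℤ (ℕ →₀ ℤ))
    (ha : a = inl ((-1 : ℤ) ^ v) + inr (((-1 : ℤ) ^ (v + 1)) • r))
    (hb : b = inl ((-1 : ℤ) ^ h) + inr (((-1 : ℤ) ^ (h + 1)) • k)) :
    (a ^ n * (b ^ n - 1) =
      inl ((-1 : ℤ) ^ (n * v) * ((-1 : ℤ) ^ (n * h) - 1)) +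
        inr ((((-1 : ℤ) ^ (n * (v + h)) * (n : ℤ)) •
          (((-1 : ℤ) ^ (n * h)) • r - r - k)))) ∧
    ∀ l : ℕ,
      (snd (a ^ n * (b ^ n - 1)) : ℕ →₀ ℤ) l =
        (-1 : ℤ) ^ (n * (v + h)) * (n : ℤ) *
          ((-1 : ℤ) ^ (n * h) * r l - r l - k l) := by
  obtain ⟨m, rfl⟩ : ∃ m, n = m + 1 := ⟨n - 1, (Nat.succ_pred_eq_of_pos hn).symm⟩
  subst ha hb
  have H : ((inl ((-1 : ℤ) ^ v) + inr (((-1 : ℤ) ^ (v + 1)) • r) : TrivSqZeroExt ℤ (ℕ →₀ ℤ)) ^ (m+1) *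
      ((inl ((-1 : ℤ) ^ h) + inr (((-1 : ℤ) ^ (h + 1)) • k)) ^ (m+1) - 1) =
      inl ((-1 : ℤ) ^ ((m+1) * v) * ((-1 : ℤ) ^ ((m+1) * h) - 1)) +
        inr ((((-1 : ℤ) ^ ((m+1) * (v + h)) * ((m+1 : ℕ) : ℤ)) •
          (((-1 : ℤ) ^ ((m+1) * h)) • r - r - k)))) := by
    rw [stmt6_pow_form, stmt6_pow_form]
    have h1 : (inl (((-1:ℤ)^h)^(m+1)) + inr ((((m+1 : ℕ) : ℤ) * ((-1:ℤ)^h) ^ (m+1-1)) • ((-1:ℤ)^(h+1) • k)) - 1 : TrivSqZeroExt ℤ (ℕ →₀ ℤ))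
        = inl (((-1:ℤ)^h)^(m+1) - 1) + inr ((((m+1 : ℕ) : ℤ) * ((-1:ℤ)^h) ^ (m+1-1)) • ((-1:ℤ)^(h+1) • k)) := by
      rw [inl_sub, inl_one]; abel
    rw [h1, stmt6_mul_form]
    apply TrivSqZeroExt.ext
    · simp only [fst_inl, fst_add, fst_inr, add_zero]
      rw [mul_comm (m+1) v, mul_comm (m+1) h, pow_mul, pow_mul]
    · simp only [snd_inl, snd_add, snd_inr, zero_add]
      ext l
      simp only [Finsupp.coe_add, Finsupp.coe_smul, Finsupp.coe_sub, Pi.add_apply, Pi.smul_apply,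
        Pi.sub_apply, smul_eq_mul]
      rw [mul_comm (m+1) h, mul_comm (m+1) (v+h), pow_mul, pow_mul, pow_add]
      have hv2 : ((-1:ℤ)^v)^2 = 1 := by rw [← pow_mul, mul_comm, pow_mul]; norm_num
      have hh2 : ((-1:ℤ)^h)^2 = 1 := by rw [← pow_mul, mul_comm, pow_mul]; norm_num
      set A := (-1:ℤ)^v with hA
      set B := (-1:ℤ)^h with hB
      have hv1 : (-1:ℤ)^(v+1) = -A := by rw [pow_succ, hA]; ring
      have hh1 : (-1:ℤ)^(h+1) = -B := by rw [pow_succ, hB]; ring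
      rw [hv1, hh1]
      simp only [Nat.add_sub_cancel, pow_succ, mul_pow]
      push_cast
      have hBm : (B^m)^2 = 1 := by rw [← pow_mul, mul_comm, pow_mul, hh2, one_pow]
      have key : (-1:ℤ)^(m*h*2) * (-1:ℤ)^(h*2) = 1 := by
        rcases neg_one_pow_eq_or ℤ (m*h) with e|e <;>
          rcases neg_one_pow_eq_or ℤ h with e2|e2 <;>
            rw [pow_mul ((-1:ℤ)) (m*h) 2, pow_mul ((-1:ℤ)) h 2, e, e2] <;> norm_num
      linear_combination ((m:ℤ)+1) * (A^m*A) * (r l) * (B^m)^2 * hh2 + ((m:ℤ)+1) * (A^m*A) * (r l) * hBm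
        + (-2*((m:ℤ)+1)*(r l)*(-1:ℤ)^v*(-1:ℤ)^(v*m)) * key
  refine ⟨H, fun l => ?_⟩
  rw [H]
  simp only [snd_add, snd_inl, snd_inr, zero_add, Finsupp.coe_smul, Pi.smul_apply,
    Finsupp.coe_sub, Pi.sub_apply, smul_eq_mul]
end

section
/- In the ring TrivSqZeroExt ℤ (ℕ →₀ ℤ), for all natural numbers v, h, all n ≥ 1, all finitely supported r, k : ℕ →₀ ℤ, and any index l ∈ ℕ with r(l) = 0 and k(l) = 1, setting a = inl((−1)^v) + inr((−1)^{v+1} • r) and b = inl((−1)^h) + inr((−1)^{h+1} • k), the l-th coordinate of the second component of a^n · (b^n − 1) equals (−1)^{n(v+h)+1}·n; in particular it is nonzero, so a^n · (b^n − 1) ≠ 0. -/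
open TrivSqZeroExt

/-- In `U(SO(2)) = TrivSqZeroExt ℤ (ℕ →₀ ℤ)`, for all `v h : ℕ`, `n ≥ 1`,
`r k : ℕ →₀ ℤ` and any index `l` with `r l = 0` and `k l = 1`, setting
`a = inl ((-1)^v) + inr ((-1)^{v+1} • r)` and
`b = inl ((-1)^h) + inr ((-1)^{h+1} • k)`, the `l`-th coordinate of the second
component of `a^n * (b^n - 1)` equals `(-1)^{n(v+h)+1}·n`; in particular it is
nonzero, so `a^n * (b^n - 1) ≠ 0`. -/
theorem stmt_7 (v h n : ℕ) (hn : 1 ≤ n) (r k : ℕ →₀ ℤ) (l : ℕ)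
    (hr : r l = 0) (hk : k l = 1)
    (a b : TrivSqZeroExt ℤ (ℕ →₀ ℤ))
    (ha : a = inl ((-1 : ℤ) ^ v) + inr (((-1 : ℤ) ^ (v + 1)) • r))
    (hb : b = inl ((-1 : ℤ) ^ h) + inr (((-1 : ℤ) ^ (h + 1)) • k)) :
    ((snd (a ^ n * (b ^ n - 1)) : ℕ →₀ ℤ) l = (-1 : ℤ) ^ (n * (v + h) + 1) * n) ∧
    ((snd (a ^ n * (b ^ n - 1)) : ℕ →₀ ℤ) l ≠ 0) ∧
    a ^ n * (b ^ n - 1) ≠ 0 := by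
  obtain ⟨m, rfl⟩ : ∃ m, n = m + 1 := ⟨n - 1, (Nat.succ_pred_eq_of_pos hn).symm⟩
  have key : ((snd (a ^ (m+1) * (b ^ (m+1) - 1)) : ℕ →₀ ℤ) l
      = (-1 : ℤ) ^ ((m+1) * (v + h) + 1) * (m+1)) := by
    subst ha hb
    simp [snd_mul, snd_pow, fst_pow, snd_sub, fst_sub, Finsupp.smul_apply, hr, hk, smul_eq_mul]
    have e : (m+1)*(v+h)+1 = v*(m+1) + (h*m + (h+1)) := by ring
    rw [e, pow_add, pow_add, ← pow_mul, ← pow_mul]; ring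
  have hne : ((snd (a ^ (m+1) * (b ^ (m+1) - 1)) : ℕ →₀ ℤ) l) ≠ 0 := by
    rw [key]
    have : ((m : ℤ) + 1) ≠ 0 := by positivity
    intro hcon
    exact this (by
      rcases mul_eq_zero.mp hcon with h1 | h1
      · exact absurd h1 (pow_ne_zero _ (by norm_num))
      · exact_mod_cast h1)
  refine ⟨by exact_mod_cast key, hne, fun hz => hne ?_⟩
  rw [hz]
  simp
end

section
/- Let n₋ ≥ 1 and n₊ ≥ 1 be integers, let d be a nonnegative integer, and let α, α' ∈ {0, 1, 2} with (α, α') ≠ (0, 0). Assume that either n₋ and n₊ have the same parity, or both n₋ ≠ 2·n₊ and n₊ ≠ 2·n₋. Then α·n₋·(−1)^{n₋·d + 1} + α'·n₊·(−1)^{n₊·d + 1} ≠ 0. -/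
/-- Let `n₋ ≥ 1` and `n₊ ≥ 1` be integers, `d` a nonnegative integer, and
`α, α' ∈ {0, 1, 2}` with `(α, α') ≠ (0, 0)`. Assume either `n₋` and `n₊` have
the same parity, or both `n₋ ≠ 2·n₊` and `n₊ ≠ 2·n₋`. Then
`α·n₋·(-1)^{n₋·d + 1} + α'·n₊·(-1)^{n₊·d + 1} ≠ 0`. -/
theorem stmt_9 (nminus nplus d : ℕ) (hminus : 1 ≤ nminus) (hplus : 1 ≤ nplus)
    (α α' : ℕ) (hα : α = 0 ∨ α = 1 ∨ α = 2) (hα' : α' = 0 ∨ α' = 1 ∨ α' = 2)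
    (hne : ¬(α = 0 ∧ α' = 0))
    (hcond : nminus % 2 = nplus % 2 ∨ (nminus ≠ 2 * nplus ∧ nplus ≠ 2 * nminus)) :
    (α : ℤ) * (nminus : ℤ) * (-1 : ℤ) ^ (nminus * d + 1) +
      (α' : ℤ) * (nplus : ℤ) * (-1 : ℤ) ^ (nplus * d + 1) ≠ 0 := by
  have h1 : ∀ k : ℕ, Even k → ((-1 : ℤ)) ^ (k + 1) = -1 := by
    intro k hk; rw [pow_succ, hk.neg_one_pow]; ring
  have h2 : ∀ k : ℕ, Odd k → ((-1 : ℤ)) ^ (k + 1) = 1 := by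
    intro k hk; rw [pow_succ, hk.neg_one_pow]; ring
  rcases Nat.even_or_odd (nminus * d) with hm | hm <;>
    rcases Nat.even_or_odd (nplus * d) with hp | hp
  · rw [h1 _ hm, h1 _ hp]
    rcases hα with rfl | rfl | rfl <;> rcases hα' with rfl | rfl | rfl <;>
      push_cast <;> omega
  · have hd : Odd d := (Nat.odd_mul.mp hp).2
    have hpo : Odd nplus := (Nat.odd_mul.mp hp).1
    have hme : Even nminus :=
      (Nat.even_mul.mp hm).resolve_right (by simpa [Nat.not_even_iff_odd] using hd)
    rw [Nat.even_iff] at hme; rw [Nat.odd_iff] at hpo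
    rw [h1 _ hm, h2 _ hp]
    rcases hα with rfl | rfl | rfl <;> rcases hα' with rfl | rfl | rfl <;>
      push_cast <;> omega
  · have hd : Odd d := (Nat.odd_mul.mp hm).2
    have hmo : Odd nminus := (Nat.odd_mul.mp hm).1
    have hpe : Even nplus :=
      (Nat.even_mul.mp hp).resolve_right (by simpa [Nat.not_even_iff_odd] using hd)
    rw [Nat.even_iff] at hpe; rw [Nat.odd_iff] at hmo
    rw [h2 _ hm, h1 _ hp]
    rcases hα with rfl | rfl | rfl <;> rcases hα' with rfl | rfl | rfl <;>
      push_cast <;> omega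
  · rw [h2 _ hm, h2 _ hp]
    rcases hα with rfl | rfl | rfl <;> rcases hα' with rfl | rfl | rfl <;>
      push_cast <;> omega
end
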